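/- Let N ≥ 1 be an integer and let B be an arbitrary N×N complex matrix. Then ∫_{H_N} exp(i·Tr(A·B)) dμ_G(A) = exp(−(1/2)·Tr(B²)), where Tr(B²) = Σ_{a,b} B_{ab} B_{ba}. -/

import Mathlib

open Matrix Complex MeasureTheory
open scoped NNReal ENNReal

noncomputable instance matrixMeasurableSpace (m n : Type*) : MeasurableSpace (Matrix m n ℂ) :=
  inferInstanceAs (MeasurableSpace (m → n → ℂ))

/-- `H_N`: the real vector space of `N × N` complex Hermitian matrices. -/
abbrev HermSpace (N : ℕ) : Type := ↥(selfAdjoint (Matrix (Fin N) (Fin N) ℂ))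

/-- The (unnormalized) Gaussian density `exp(−(1/2) Tr A²)` on `H_N`, as an
`ℝ≥0∞`-valued function (for Hermitian `A`, `Tr A²` is real, so we take the real part). -/
noncomputable def gaussDensity (N : ℕ) (A : HermSpace N) : ENNReal :=
  ENNReal.ofReal (Real.exp (-(1 / 2) *
    (((A : Matrix (Fin N) (Fin N) ℂ) * (A : Matrix (Fin N) (Fin N) ℂ)).trace).re))

/-- The Gaussian probability measure `μ_G` on `H_N`: the measure with density proportional
to `exp(−(1/2) Tr A²)` with respect to an additive Haar (Lebesgue) measure `ν` on `H_N`,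
normalized to total mass `1`. -/
noncomputable def gaussMeasure (N : ℕ) (ν : Measure (HermSpace N)) : Measure (HermSpace N) :=
  (∫⁻ A, gaussDensity N A ∂ν)⁻¹ • ν.withDensity (gaussDensity N)

noncomputable section
def rt2 : ℂ := (Real.sqrt 2 : ℝ)
lemma rt2_ne : rt2 ≠ 0 := by simp [rt2, Complex.ofReal_ne_zero, Real.sqrt_ne_zero']
variable {N : ℕ}
def toMat (x : Fin N × Fin N → ℝ) : Matrix (Fin N) (Fin N) ℂ :=
  fun a b => if a = b then (x (a, a) : ℂ)
    else if a < b then ((x (a, b) : ℂ) + Complex.I * (x (b, a) : ℂ)) / rt2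
    else ((x (b, a) : ℂ) - Complex.I * (x (a, b) : ℂ)) / rt2

lemma rt2_sq : rt2 * rt2 = 2 := by
  rw [rt2, ← Complex.ofReal_mul, Real.mul_self_sqrt (by norm_num)]
  norm_num

/-- coefficients of the linear functional A ↦ Tr(A B) in coordinates -/
def coefB (B : Matrix (Fin N) (Fin N) ℂ) (p : Fin N × Fin N) : ℂ :=
  if p.1 = p.2 then B p.1 p.1
  else if p.1 < p.2 then (B p.1 p.2 + B p.2 p.1) / rt2
  else Complex.I * (B p.1 p.2 - B p.2 p.1) / rt2

lemma sum_swap_eq {f g : Fin N × Fin N → ℂ}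
    (h : ∀ p : Fin N × Fin N, f p + f p.swap = g p + g p.swap) :
    ∑ p : Fin N × Fin N, f p = ∑ p : Fin N × Fin N, g p := by
  have hf : ∑ p : Fin N × Fin N, f p.swap = ∑ p : Fin N × Fin N, f p :=
    Fintype.sum_equiv (Equiv.prodComm _ _) _ _ (fun p => rfl)
  have hg : ∑ p : Fin N × Fin N, g p.swap = ∑ p : Fin N × Fin N, g p :=
    Fintype.sum_equiv (Equiv.prodComm _ _) _ _ (fun p => rfl)
  have : (2 : ℂ) * ∑ p : Fin N × Fin N, f p = 2 * ∑ p : Fin N × Fin N, g p := by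
    calc (2:ℂ) * ∑ p : Fin N × Fin N, f p
        = ∑ p : Fin N × Fin N, (f p + f p.swap) := by
          rw [Finset.sum_add_distrib, hf]; ring
      _ = ∑ p : Fin N × Fin N, (g p + g p.swap) := by
          exact Finset.sum_congr rfl (fun p _ => h p)
      _ = 2 * ∑ p : Fin N × Fin N, g p := by
          rw [Finset.sum_add_distrib, hg]; ring
  exact mul_left_cancel₀ two_ne_zero this

lemma trace_toMat_mul (x : Fin N × Fin N → ℝ) (B : Matrix (Fin N) (Fin N) ℂ) :
    (toMat x * B).trace = ∑ p : Fin N × Fin N, (x p : ℂ) * coefB B p := by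
  have h1 : (toMat x * B).trace = ∑ p : Fin N × Fin N, toMat x p.1 p.2 * B p.2 p.1 := by
    rw [Matrix.trace, Fintype.sum_prod_type]
    simp [Matrix.diag, Matrix.mul_apply]
  rw [h1]
  apply sum_swap_eq
  rintro ⟨a, b⟩
  rcases lt_trichotomy a b with hab | hab | hab
  · have h1 : ¬ (a = b) := ne_of_lt hab
    have h2 : ¬ (b = a) := (ne_of_lt hab).symm
    have h3 : ¬ (b < a) := not_lt_of_gt hab
    simp only [toMat, coefB, Prod.swap, h1, h2, h3, hab, if_true, if_false]
    field_simp
    ring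
  · subst hab
    simp [toMat, coefB, Prod.swap]
  · have h1 : ¬ (a = b) := (ne_of_lt hab).symm
    have h2 : ¬ (b = a) := ne_of_lt hab
    have h3 : ¬ (a < b) := not_lt_of_gt hab
    simp only [toMat, coefB, Prod.swap, h1, h2, h3, hab, if_true, if_false]
    field_simp
    ring

lemma coefB_toMat (x : Fin N × Fin N → ℝ) (p : Fin N × Fin N) :
    coefB (toMat x) p = (x p : ℂ) := by
  obtain ⟨a, b⟩ := p
  rcases lt_trichotomy a b with hab | hab | hab
  · have h1 : ¬ (a = b) := ne_of_lt hab
    have h3 : ¬ (b < a) := not_lt_of_gt hab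
    have h2 : ¬ (b = a) := (ne_of_lt hab).symm
    simp only [coefB, toMat, h1, h2, h3, hab, if_true, if_false]
    rw [← add_div, div_div, rt2_sq, div_eq_iff (two_ne_zero (α := ℂ))]
    ring
  · subst hab
    simp [coefB, toMat]
  · have h1 : ¬ (a = b) := (ne_of_lt hab).symm
    have h2 : ¬ (b = a) := ne_of_lt hab
    have h3 : ¬ (a < b) := not_lt_of_gt hab
    simp only [coefB, toMat, h1, h2, h3, hab, if_true, if_false]
    rw [← sub_div, mul_div_assoc, div_div, rt2_sq, ← mul_div_assoc, div_eq_iff (two_ne_zero (α := ℂ))]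
    have : Complex.I * ((x (b,a) - Complex.I * x (a,b)) - (x (b,a) + Complex.I * x (a,b)))
        = Complex.I * Complex.I * (-2 * x (a,b)) := by ring
    rw [this, Complex.I_mul_I]
    ring

lemma sum_coefB_sq (B : Matrix (Fin N) (Fin N) ℂ) :
    ∑ p : Fin N × Fin N, (coefB B p) ^ 2 = ∑ a, ∑ b, B a b * B b a := by
  have hr : ∑ a, ∑ b, B a b * B b a
      = ∑ p : Fin N × Fin N, B p.1 p.2 * B p.2 p.1 :=
    (Fintype.sum_prod_type (f := fun p : Fin N × Fin N => B p.1 p.2 * B p.2 p.1)).symm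
  rw [hr]
  apply sum_swap_eq
  rintro ⟨a, b⟩
  rcases lt_trichotomy a b with hab | hab | hab
  · have h1 : ¬ (a = b) := ne_of_lt hab
    have h2 : ¬ (b = a) := (ne_of_lt hab).symm
    have h3 : ¬ (b < a) := not_lt_of_gt hab
    simp only [coefB, Prod.swap, h1, h2, h3, hab, if_true, if_false]
    rw [div_pow, div_pow, mul_pow, Complex.I_sq]
    have h2sq : rt2 ^ 2 = (2:ℂ) := by rw [sq, rt2_sq]
    rw [h2sq, ← add_div, div_eq_iff (two_ne_zero (α := ℂ))]
    ring
  · subst hab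
    simp only [coefB, Prod.swap, if_true]
    ring_nf
  · have h1 : ¬ (a = b) := (ne_of_lt hab).symm
    have h2 : ¬ (b = a) := ne_of_lt hab
    have h3 : ¬ (a < b) := not_lt_of_gt hab
    simp only [coefB, Prod.swap, h1, h2, h3, hab, if_true, if_false]
    rw [div_pow, div_pow, mul_pow, Complex.I_sq]
    have h2sq : rt2 ^ 2 = (2:ℂ) := by rw [sq, rt2_sq]
    rw [h2sq, ← add_div, div_eq_iff (two_ne_zero (α := ℂ))]
    ring

lemma trace_toMat_sq (x : Fin N × Fin N → ℝ) :
    (toMat x * toMat x).trace = (↑(∑ p : Fin N × Fin N, (x p) ^ 2) : ℂ) := by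
  rw [trace_toMat_mul]
  push_cast
  exact Finset.sum_congr rfl fun p _ => by rw [coefB_toMat]; ring


lemma conj_aux (u v : ℝ) :
    (starRingEnd ℂ) (((u:ℂ) - Complex.I * v) / rt2) = ((u:ℂ) + Complex.I * v) / rt2 := by
  rw [rt2, map_div₀, map_sub, _root_.map_mul, Complex.conj_I, Complex.conj_ofReal,
    Complex.conj_ofReal, Complex.conj_ofReal]
  ring

lemma toMat_mem (x : Fin N × Fin N → ℝ) :
    toMat x ∈ selfAdjoint (Matrix (Fin N) (Fin N) ℂ) := by
  rw [selfAdjoint.mem_iff]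
  ext a b
  rw [Matrix.star_apply]
  rcases lt_trichotomy a b with hab | hab | hab
  · have h1 : ¬ (a = b) := ne_of_lt hab
    have h2 : ¬ (b = a) := (ne_of_lt hab).symm
    have h3 : ¬ (b < a) := not_lt_of_gt hab
    simp only [toMat, h1, h2, h3, hab, if_true, if_false]
    exact conj_aux _ _
  · subst hab
    simp [toMat, Complex.conj_ofReal]
  · have h1 : ¬ (a = b) := (ne_of_lt hab).symm
    have h2 : ¬ (b = a) := ne_of_lt hab
    have h3 : ¬ (a < b) := not_lt_of_gt hab
    simp only [toMat, h1, h2, h3, hab, if_true, if_false]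
    rw [← conj_aux (x (b,a)) (x (a,b))]
    exact star_star _

def invCoord (A : Matrix (Fin N) (Fin N) ℂ) (p : Fin N × Fin N) : ℝ :=
  if p.1 = p.2 then (A p.1 p.1).re
  else if p.1 < p.2 then Real.sqrt 2 * (A p.1 p.2).re
  else Real.sqrt 2 * (A p.2 p.1).im

lemma sqrt2_ne : Real.sqrt 2 ≠ 0 := by
  simp [Real.sqrt_ne_zero']

lemma invCoord_toMat (x : Fin N × Fin N → ℝ) : invCoord (toMat x) = x := by
  funext p
  obtain ⟨a, b⟩ := p
  rcases lt_trichotomy a b with hab | hab | hab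
  · have h1 : ¬ (a = b) := ne_of_lt hab
    simp only [invCoord, toMat, h1, hab, if_true, if_false]
    rw [rt2, Complex.div_ofReal_re]
    simp only [Complex.add_re, Complex.ofReal_re, Complex.mul_re, Complex.I_re, Complex.I_im,
      Complex.ofReal_im]
    field_simp
    ring
  · subst hab
    simp [invCoord, toMat]
  · have h1 : ¬ (a = b) := (ne_of_lt hab).symm
    have h2 : ¬ (b = a) := ne_of_lt hab
    have h3 : ¬ (a < b) := not_lt_of_gt hab
    simp only [invCoord, toMat, h1, h2, h3, hab, if_true, if_false]
    rw [rt2, Complex.div_ofReal_im]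
    simp only [Complex.add_im, Complex.ofReal_im, Complex.mul_im, Complex.I_re, Complex.I_im,
      Complex.ofReal_re]
    field_simp
    ring

lemma toMat_invCoord {A : Matrix (Fin N) (Fin N) ℂ}
    (hA : A ∈ selfAdjoint (Matrix (Fin N) (Fin N) ℂ)) : toMat (invCoord A) = A := by
  rw [selfAdjoint.mem_iff] at hA
  have he : ∀ a b, (starRingEnd ℂ) (A a b) = A b a := by
    intro a b
    conv_rhs => rw [← hA]
    rw [Matrix.star_apply, Complex.star_def]
  funext a b
  rcases lt_trichotomy a b with hab | hab | hab
  · have h1 : ¬ (a = b) := ne_of_lt hab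
    have h2 : ¬ (b = a) := (ne_of_lt hab).symm
    have h3 : ¬ (b < a) := not_lt_of_gt hab
    simp only [toMat, invCoord, h1, h2, h3, hab, if_true, if_false]
    rw [rt2, div_eq_iff (Complex.ofReal_ne_zero.mpr sqrt2_ne)]
    apply Complex.ext <;>
      · simp only [Complex.add_re, Complex.add_im, Complex.mul_re, Complex.mul_im,
          Complex.ofReal_re, Complex.ofReal_im, Complex.I_re, Complex.I_im]
        field_simp
        ring
  · subst hab
    have him : (A a a).im = 0 := by
      have h4 := congrArg Complex.im (he a a)
      simp only [Complex.conj_im] at h4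
      linarith
    simp only [toMat, invCoord, if_true]
    apply Complex.ext <;> simp [him]
  · have h1 : ¬ (a = b) := (ne_of_lt hab).symm
    have h2 : ¬ (b = a) := ne_of_lt hab
    have h3 : ¬ (a < b) := not_lt_of_gt hab
    simp only [toMat, invCoord, h1, h2, h3, hab, if_true, if_false]
    rw [← he b a]
    rw [rt2, div_eq_iff (Complex.ofReal_ne_zero.mpr sqrt2_ne)]
    apply Complex.ext <;>
      · simp only [Complex.sub_re, Complex.sub_im, Complex.mul_re, Complex.mul_im,
          Complex.ofReal_re, Complex.ofReal_im, Complex.I_re, Complex.I_im,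
          Complex.conj_re, Complex.conj_im]
        field_simp
        ring

lemma toMat_add (x y : Fin N × Fin N → ℝ) : toMat (x + y) = toMat x + toMat y := by
  funext a b
  simp only [toMat, Pi.add_apply, Matrix.add_apply]
  split_ifs <;> push_cast <;> ring

lemma toMat_smul (c : ℝ) (x : Fin N × Fin N → ℝ) : toMat (c • x) = c • toMat x := by
  funext a b
  simp only [toMat, Pi.smul_apply, Matrix.smul_apply, smul_eq_mul, Complex.real_smul]
  split_ifs <;> push_cast <;> ring

/-- The basic coordinate linear equivalence between `ℝ^(N²)` and Hermitian matrices. -/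
def matEquiv (N : ℕ) : (Fin N × Fin N → ℝ) ≃ₗ[ℝ] HermSpace N where
  toFun x := ⟨toMat x, toMat_mem x⟩
  map_add' x y := Subtype.ext (toMat_add x y)
  map_smul' c x := Subtype.ext (toMat_smul c x)
  invFun A := invCoord (A : Matrix (Fin N) (Fin N) ℂ)
  left_inv x := invCoord_toMat x
  right_inv A := Subtype.ext (toMat_invCoord A.2)

instance : BorelSpace (Matrix (Fin N) (Fin N) ℂ) :=
  inferInstanceAs (BorelSpace (Fin N → Fin N → ℂ))

instance : SecondCountableTopology (Matrix (Fin N) (Fin N) ℂ) :=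
  inferInstanceAs (SecondCountableTopology (Fin N → Fin N → ℂ))

instance : BorelSpace (HermSpace N) :=
  inferInstanceAs (BorelSpace
    ((selfAdjoint (Matrix (Fin N) (Fin N) ℂ) : Set (Matrix (Fin N) (Fin N) ℂ))))

instance : SecondCountableTopology (HermSpace N) :=
  inferInstanceAs (SecondCountableTopology
    ((selfAdjoint (Matrix (Fin N) (Fin N) ℂ) : Set (Matrix (Fin N) (Fin N) ℂ))))
example : T2Space (HermSpace N) := inferInstance

instance : ContinuousSMul ℝ (HermSpace N) := by
  constructor
  apply continuous_induced_rng.2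
  exact continuous_fst.smul (continuous_subtype_val.comp continuous_snd)

/-- The coordinate equivalence as a continuous linear equivalence. -/
def matCLE (N : ℕ) : (Fin N × Fin N → ℝ) ≃L[ℝ] HermSpace N :=
  (matEquiv N).toContinuousLinearEquiv

instance : LocallyCompactSpace (HermSpace N) :=
  ((matCLE N).toHomeomorph.locallyCompactSpace_iff).1 inferInstance

/-- the reference Haar measure on HermSpace -/
def refMeasure (N : ℕ) : Measure (HermSpace N) := Measure.map (matCLE N) volume

instance : (refMeasure N).IsAddHaarMeasure :=
  (matCLE N).isAddHaarMeasure_map volume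

instance : SigmaFinite (refMeasure N) := by
  have : SigmaCompactSpace (HermSpace N) := inferInstance
  infer_instance


/-- the real-valued Gaussian weight -/
def hfun (N : ℕ) (A : HermSpace N) : ℝ :=
  Real.exp (-(1 / 2) *
    (((A : Matrix (Fin N) (Fin N) ℂ) * (A : Matrix (Fin N) (Fin N) ℂ)).trace).re)

lemma gaussDensity_eq (A : HermSpace N) : gaussDensity N A = ENNReal.ofReal (hfun N A) := rfl

lemma hfun_pos (A : HermSpace N) : 0 < hfun N A := Real.exp_pos _

lemma continuous_hfun : Continuous (hfun N) := by
  apply Real.continuous_exp.comp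
  apply Continuous.mul continuous_const
  exact Complex.continuous_re.comp
    ((continuous_subtype_val.matrix_mul continuous_subtype_val).matrix_trace)

lemma continuous_integrand (B : Matrix (Fin N) (Fin N) ℂ) :
    Continuous (fun A : HermSpace N =>
      Complex.exp (Complex.I * ((A : Matrix (Fin N) (Fin N) ℂ) * B).trace)) := by
  apply Complex.continuous_exp.comp
  exact continuous_const.mul
    ((continuous_subtype_val.matrix_mul continuous_const).matrix_trace)

lemma matCLE_coe (x : Fin N × Fin N → ℝ) :
    ((matCLE N x : HermSpace N) : Matrix (Fin N) (Fin N) ℂ) = toMat x := rfl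

lemma hfun_matCLE (x : Fin N × Fin N → ℝ) :
    hfun N (matCLE N x) = Real.exp (-(1/2) * ∑ p : Fin N × Fin N, (x p)^2) := by
  unfold hfun
  rw [matCLE_coe, trace_toMat_sq, Complex.ofReal_re]

open Real in
lemma integral_hfun_pi :
    ∫ x : Fin N × Fin N → ℝ, Real.exp (-(1/2) * ∑ p : Fin N × Fin N, (x p)^2)
      = (Real.sqrt (2 * π)) ^ (N * N) := by
  have h1 : ∀ x : Fin N × Fin N → ℝ, Real.exp (-(1/2) * ∑ p : Fin N × Fin N, (x p)^2)
      = ∏ p : Fin N × Fin N, Real.exp (-(1/2) * (x p)^2) := by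
    intro x
    rw [← Real.exp_sum, Finset.mul_sum]
  simp_rw [h1]
  rw [MeasureTheory.volume_pi, MeasureTheory.integral_fintype_prod_eq_pow (ι := Fin N × Fin N)
    (fun t : ℝ => Real.exp (-(1/2) * t^2))]
  have h2 : ∫ t : ℝ, Real.exp (-(1/2) * t^2) = Real.sqrt (2 * π) := by
    rw [integral_gaussian]
    congr 1
    field_simp
  rw [h2]
  simp [Fintype.card_prod]

lemma integrable_hfun_pi :
    Integrable (fun x : Fin N × Fin N → ℝ =>
      Real.exp (-(1/2) * ∑ p : Fin N × Fin N, (x p)^2)) := by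
  have h1 : ∀ x : Fin N × Fin N → ℝ, Real.exp (-(1/2) * ∑ p : Fin N × Fin N, (x p)^2)
      = ∏ p : Fin N × Fin N, Real.exp (-(1/2) * (x p)^2) := by
    intro x
    rw [← Real.exp_sum, Finset.mul_sum]
  simp_rw [h1]
  exact Integrable.fintype_prod (f := fun _ t => Real.exp (-(1/2) * t^2))
    (fun _ => integrable_exp_neg_mul_sq (by norm_num))

open Real in
lemma lintegral_gaussDensity :
    ∫⁻ A, gaussDensity N A ∂(refMeasure N)
      = ENNReal.ofReal ((Real.sqrt (2 * π)) ^ (N * N)) := by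
  rw [refMeasure, lintegral_map (by
      exact (continuous_hfun.measurable).ennreal_ofReal)
    (matCLE N).continuous.measurable]
  have : ∀ x : Fin N × Fin N → ℝ, gaussDensity N (matCLE N x)
      = ENNReal.ofReal (Real.exp (-(1/2) * ∑ p : Fin N × Fin N, (x p)^2)) := by
    intro x
    rw [gaussDensity_eq, hfun_matCLE]
  simp_rw [this]
  rw [← MeasureTheory.ofReal_integral_eq_lintegral_ofReal integrable_hfun_pi
    (Filter.Eventually.of_forall fun x => (Real.exp_pos _).le), integral_hfun_pi]

open Real in
lemma integral_main (B : Matrix (Fin N) (Fin N) ℂ) :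
    ∫ A : HermSpace N, hfun N A •
        Complex.exp (Complex.I * ((A : Matrix (Fin N) (Fin N) ℂ) * B).trace) ∂(refMeasure N)
      = ((Real.sqrt (2 * π)) ^ (N * N) : ℝ) *
          Complex.exp (-(1 / 2 : ℂ) * ∑ a, ∑ b, B a b * B b a) := by
  rw [refMeasure, integral_map (matCLE N).continuous.measurable.aemeasurable
    (f := fun A : HermSpace N => hfun N A •
      Complex.exp (Complex.I * ((A : Matrix (Fin N) (Fin N) ℂ) * B).trace))
    (((continuous_hfun).smul (continuous_integrand B)).aestronglyMeasurable)]
  have key : ∀ x : Fin N × Fin N → ℝ,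
      hfun N (matCLE N x) •
        Complex.exp (Complex.I *
          (((matCLE N x : HermSpace N) : Matrix (Fin N) (Fin N) ℂ) * B).trace)
      = Complex.exp (-(1/2 : ℂ) * ∑ p : Fin N × Fin N, ((x p : ℂ))^2
          + ∑ p : Fin N × Fin N, (Complex.I * coefB B p) * (x p)) := by
    intro x
    have h1 : (↑(-(1/2) * ∑ p : Fin N × Fin N, (x p)^2) : ℂ)
        = -(1/2:ℂ) * ∑ p : Fin N × Fin N, ((x p : ℂ))^2 := by push_cast; ring
    have h2 : Complex.I * ∑ p : Fin N × Fin N, (↑(x p)) * coefB B p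
        = ∑ p : Fin N × Fin N, (Complex.I * coefB B p) * ↑(x p) := by
      rw [Finset.mul_sum]
      exact Finset.sum_congr rfl fun p _ => by ring
    rw [hfun_matCLE, matCLE_coe, trace_toMat_mul, Complex.real_smul, Complex.ofReal_exp,
      ← Complex.exp_add, h1, h2]
  simp_rw [key]
  rw [GaussianFourier.integral_cexp_neg_mul_sum_add (by norm_num : (0:ℝ) < ((1:ℂ)/2).re)
    (fun p : Fin N × Fin N => Complex.I * coefB B p)]
  have hsum : ∑ p : Fin N × Fin N, (Complex.I * coefB B p)^2
      = -∑ a, ∑ b, B a b * B b a := by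
    rw [← sum_coefB_sq B, ← Finset.sum_neg_distrib]
    exact Finset.sum_congr rfl fun p _ => by
      rw [mul_pow, Complex.I_sq]; ring
  rw [hsum]
  have hcard : (Fintype.card (Fin N × Fin N)) = N * N := by simp
  have hpre : ((↑π / ((1:ℂ)/2)) ^ ((Fintype.card (Fin N × Fin N)) / 2 : ℂ) : ℂ)
      = ((Real.sqrt (2 * π)) ^ (N * N) : ℝ) := by
    have hb : (↑π / ((1:ℂ)/2)) = ((2 * π : ℝ) : ℂ) := by push_cast; ring
    have h2 : ((Fintype.card (Fin N × Fin N)) / 2 : ℂ)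
        = ((N * N : ℕ) : ℂ) * ((1:ℂ)/2) := by
      rw [hcard]; push_cast; ring
    rw [hb, h2, Complex.cpow_nat_mul]
    have h3 : (((2 * π : ℝ) : ℂ)) ^ ((1:ℂ)/2) = ((Real.sqrt (2 * π) : ℝ) : ℂ) := by
      rw [Real.sqrt_eq_rpow, Complex.ofReal_cpow (by positivity)]
      norm_num
    rw [h3, ← Complex.ofReal_pow]
  rw [hpre]
  congr 1
  have : (4 : ℂ) * ((1:ℂ)/2) = 2 := by norm_num
  rw [this]
  ring

lemma gaussMeasure_nnsmul (c : ℝ≥0) (hc : c ≠ 0) (μ : Measure (HermSpace N)) :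
    gaussMeasure N (c • μ) = gaussMeasure N μ := by
  have hc' : (c : ℝ≥0∞) ≠ 0 := ENNReal.coe_ne_zero.2 hc
  unfold gaussMeasure
  have h1 : (c • μ : Measure (HermSpace N)) = ((c : ℝ≥0∞) • μ) := rfl
  rw [h1, lintegral_smul_measure, smul_eq_mul, withDensity_smul_measure, smul_smul,
    ENNReal.mul_inv (Or.inl hc') (Or.inl ENNReal.coe_ne_top), mul_right_comm,
    ENNReal.inv_mul_cancel hc' ENNReal.coe_ne_top, one_mul]


end

/-- For any `N × N` complex matrix `B`,
`∫_{H_N} exp(i Tr(A B)) dμ_G(A) = exp(−(1/2) Tr B²)`, with `Tr B² = Σ_{a,b} B_{ab} B_{ba}`. -/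

theorem gaussian_fourier_transform_hermitian (N : ℕ) (hN : 1 ≤ N)
    (B : Matrix (Fin N) (Fin N) ℂ)
    (ν : Measure (HermSpace N)) (hν : ν.IsAddHaarMeasure) :
    ∫ A : HermSpace N,
        Complex.exp (Complex.I * ((A : Matrix (Fin N) (Fin N) ℂ) * B).trace)
        ∂(gaussMeasure N ν)
      = Complex.exp (-(1 / 2 : ℂ) * ∑ a, ∑ b, B a b * B b a) := by
  haveI := hν
  have huniq : ν = Measure.addHaarScalarFactor ν (refMeasure N) • refMeasure N :=
    Measure.isAddLeftInvariant_eq_smul ν (refMeasure N)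
  have hkpos : 0 < Measure.addHaarScalarFactor ν (refMeasure N) :=
    Measure.addHaarScalarFactor_pos_of_isAddHaarMeasure ν (refMeasure N)
  rw [huniq, gaussMeasure_nnsmul _ hkpos.ne']
  unfold gaussMeasure
  rw [integral_smul_measure, lintegral_gaussDensity]
  have e1 : (refMeasure N).withDensity (gaussDensity N)
      = (refMeasure N).withDensity (fun A => ((Real.toNNReal (hfun N A) : ℝ≥0) : ℝ≥0∞)) := rfl
  rw [e1, integral_withDensity_eq_integral_smul (continuous_hfun.measurable.real_toNNReal)]
  simp_rw [NNReal.smul_def, Real.coe_toNNReal _ (hfun_pos _).le]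
  rw [integral_main]
  have hs : 0 < (Real.sqrt (2 * Real.pi)) ^ (N * N) :=
    pow_pos (Real.sqrt_pos.2 (by positivity)) _
  rw [← ENNReal.ofReal_inv_of_pos hs, ENNReal.toReal_ofReal (by positivity),
    Complex.real_smul, ← mul_assoc, ← Complex.ofReal_mul, inv_mul_cancel₀ hs.ne',
    Complex.ofReal_one, one_mul]
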